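/- Let M ∈ ℝ^{d×d} be a Metzler Hurwitz-stable matrix. Then the vector vᵀ := (-1)^{d+1} 𝟙ᵀ · Adj(M), where Adj denotes the adjugate matrix and 𝟙 the all-ones vector, has all entries positive and satisfies vᵀM = -(-1)^d det(M) 𝟙ᵀ, which is a vector with all entries negative. -/

import Mathlib

open Matrix

def Metzler {d : ℕ} (M : Matrix (Fin d) (Fin d) ℝ) : Prop :=
  ∀ i j, i ≠ j → 0 ≤ M i j

def HurwitzStable {d : ℕ} (M : Matrix (Fin d) (Fin d) ℝ) : Prop :=
  ∀ μ ∈ spectrum ℂ (M.map Complex.ofReal), μ.re < 0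

open Polynomial Filter

lemma eval_charpoly' {d : ℕ} {R : Type*} [CommRing R] (M : Matrix (Fin d) (Fin d) R) (t : R) :
    M.charpoly.eval t = (t • (1 : Matrix (Fin d) (Fin d) R) - M).det := by
  rw [Matrix.charpoly]
  have := (Polynomial.evalRingHom t).map_det (Matrix.charmatrix M)
  rw [coe_evalRingHom] at this
  rw [this]
  congr 1
  ext i j
  by_cases h : i = j <;>
    simp [RingHom.mapMatrix_apply, Matrix.map_apply, Matrix.charmatrix_apply, h,
      Matrix.one_apply, Matrix.diagonal_apply]

-- spectrum membership iff det = 0, over a field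
lemma mem_spectrum_iff_det {d : ℕ} {K : Type*} [Field K] (A : Matrix (Fin d) (Fin d) K) (μ : K) :
    μ ∈ spectrum K A ↔ (μ • (1 : Matrix (Fin d) (Fin d) K) - A).det = 0 := by
  rw [spectrum.mem_iff, Algebra.algebraMap_eq_smul_one, Matrix.isUnit_iff_isUnit_det,
    isUnit_iff_ne_zero, not_ne_iff]

lemma charpoly_root_iff_spectrum {d : ℕ} {K : Type*} [Field K] (A : Matrix (Fin d) (Fin d) K)
    (μ : K) : A.charpoly.eval μ = 0 ↔ μ ∈ spectrum K A := by
  rw [eval_charpoly', mem_spectrum_iff_det]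

lemma hurwitz_eval_ne_zero {d : ℕ} {M : Matrix (Fin d) (Fin d) ℝ} (hH : HurwitzStable M)
    {t : ℝ} (ht : 0 ≤ t) : M.charpoly.eval t ≠ 0 := by
  intro h0
  have hmap : (M.map Complex.ofReal).charpoly = M.charpoly.map Complex.ofRealHom := by
    exact Matrix.charpoly_map M Complex.ofRealHom
  have hev : (M.map Complex.ofReal).charpoly.eval (t : ℂ) = 0 := by
    rw [hmap, Polynomial.eval_map, show ((t:ℂ)) = Complex.ofRealHom t from rfl,
      Polynomial.eval₂_at_apply, h0, map_zero]
  have hsp : (t : ℂ) ∈ spectrum ℂ (M.map Complex.ofReal) :=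
    (charpoly_root_iff_spectrum _ _).mp hev
  have := hH _ hsp
  rw [Complex.ofReal_re] at this
  linarith

lemma det_sign_pos {d : ℕ} {M : Matrix (Fin d) (Fin d) ℝ} (hH : HurwitzStable M) :
    0 < (-1 : ℝ) ^ d * M.det := by
  rcases Nat.eq_zero_or_pos d with hd | hd
  · subst hd
    simp [Matrix.det_fin_zero]
  · have hmonic := Matrix.charpoly_monic M
    have hdeg : (0 : ℕ) < M.charpoly.natDegree := by
      rw [Matrix.charpoly_natDegree_eq_dim]
      simpa using hd
    -- eventually positive at infinity
    have htop : Filter.Tendsto (fun x => M.charpoly.eval x) Filter.atTop Filter.atTop := by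
      apply Polynomial.tendsto_atTop_of_leadingCoeff_nonneg
      · rw [Polynomial.degree_eq_natDegree hmonic.ne_zero]
        exact_mod_cast hdeg
      · rw [hmonic.leadingCoeff]; norm_num
    have hev0 : 0 < M.charpoly.eval 0 := by
      rcases lt_trichotomy (M.charpoly.eval 0) 0 with hneg | hz | hpos
      · obtain ⟨T, hT⟩ := (htop.eventually_gt_atTop 0).and (Filter.eventually_ge_atTop 0)
          |>.exists
        obtain ⟨t, htmem, htval⟩ := intermediate_value_Icc hT.2
          (M.charpoly.continuous.continuousOn) ⟨hneg.le, hT.1.le⟩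
        exact absurd htval (hurwitz_eval_ne_zero hH htmem.1)
      · exact absurd hz (hurwitz_eval_ne_zero hH le_rfl)
      · exact hpos
    have hc := Matrix.det_eq_sign_charpoly_coeff M
    rw [Polynomial.coeff_zero_eq_eval_zero] at hc
    rw [hc]
    have : ((-1 : ℝ) ^ d) * ((-1) ^ Fintype.card (Fin d) * M.charpoly.eval 0)
        = M.charpoly.eval 0 := by
      rw [Fintype.card_fin, ← mul_assoc, ← pow_add, ← two_mul, pow_mul]
      norm_num
    rw [this]
    exact hev0

section Neumann
attribute [local instance] Matrix.linftyOpNormedRing Matrix.linftyOpNormedAlgebra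

lemma neumann_series {d : ℕ} (hd : 0 < d) (A : Matrix (Fin d) (Fin d) ℂ)
    (hA : ∀ z ∈ spectrum ℂ A, ‖z‖ < 1) :
    ∃ S : Matrix (Fin d) (Fin d) ℂ, HasSum (fun n => A ^ n) S ∧
      (1 - A) * S = 1 ∧ S * (1 - A) = 1 := by
  haveI : Nonempty (Fin d) := Fin.pos_iff_nonempty.mp hd
  -- spectral radius < 1
  have hρ : spectralRadius ℂ A < 1 := by
    have := spectrum.spectralRadius_lt_of_forall_lt A (r := 1)
      (fun z hz => by
        have := hA z hz
        exact_mod_cast this)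
    simpa using this
  obtain ⟨r, hρr, hr1⟩ := ENNReal.lt_iff_exists_nnreal_btwn.mp hρ
  have hr1' : (r : ℝ) < 1 := by exact_mod_cast hr1
  have hgel := spectrum.pow_nnnorm_pow_one_div_tendsto_nhds_spectralRadius A
  have hev : ∀ᶠ n : ℕ in atTop, (‖A ^ n‖₊ : ENNReal) ^ (1 / (n:ℝ)) < r :=
    hgel.eventually_lt_const hρr
  have hbound : ∀ᶠ n : ℕ in atTop, ‖A ^ n‖ ≤ (r : ℝ) ^ n := by
    filter_upwards [hev, eventually_ge_atTop 1] with n hn hn1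
    have hne : (n : ℝ) ≠ 0 := by positivity
    have h1 : ((‖A ^ n‖₊ : ENNReal) ^ (1 / (n:ℝ))) ^ (n : ℕ) ≤ (r : ENNReal) ^ (n : ℕ) :=
      pow_le_pow_left' hn.le n
    rw [← ENNReal.rpow_natCast ((‖A ^ n‖₊ : ENNReal) ^ (1 / (n:ℝ))) n,
      ← ENNReal.rpow_mul, one_div, inv_mul_cancel₀ hne, ENNReal.rpow_one] at h1
    have h2 : ‖A ^ n‖₊ ≤ r ^ n := by exact_mod_cast h1
    calc ‖A ^ n‖ = (‖A ^ n‖₊ : ℝ) := (coe_nnnorm _).symm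
    _ ≤ ((r ^ n : NNReal) : ℝ) := by exact_mod_cast h2
    _ = (r:ℝ) ^ n := by push_cast; ring
  have hsummable : Summable (fun n : ℕ => A ^ n) := by
    apply Summable.of_norm_bounded_eventually
      (summable_geometric_of_lt_one r.coe_nonneg hr1')
    rwa [Nat.cofinite_eq_atTop]
  obtain ⟨S, hS⟩ := hsummable
  refine ⟨S, hS, ?_, ?_⟩
  · have ht : Tendsto (fun N => ∑ n ∈ Finset.range N, A ^ n) atTop (nhds S) :=
      hS.tendsto_sum_nat
    have h2 : Tendsto (fun N => (1 - A) * ∑ n ∈ Finset.range N, A ^ n) atTop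
        (nhds ((1 - A) * S)) := ht.const_mul _
    have hpow0 : Tendsto (fun n : ℕ => A ^ n) atTop (nhds 0) :=
      squeeze_zero_norm' hbound (tendsto_pow_atTop_nhds_zero_of_lt_one r.coe_nonneg hr1')
    have h3 : Tendsto (fun N : ℕ => (1 - A) * ∑ n ∈ Finset.range N, A ^ n) atTop (nhds 1) := by
      have : (fun N : ℕ => (1 - A) * ∑ n ∈ Finset.range N, A ^ n)
          = fun N : ℕ => 1 - A ^ N := by
        funext N
        have := mul_geom_sum A N
        rw [← neg_sub A 1, neg_mul, this, neg_sub]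
      rw [this]
      have := ((tendsto_const_nhds :
          Tendsto (fun _ : ℕ => (1 : Matrix (Fin d) (Fin d) ℂ)) atTop _).sub hpow0)
      simpa using this
    exact tendsto_nhds_unique h2 h3
  · have ht : Tendsto (fun N => ∑ n ∈ Finset.range N, A ^ n) atTop (nhds S) :=
      hS.tendsto_sum_nat
    have h2 : Tendsto (fun N => (∑ n ∈ Finset.range N, A ^ n) * (1 - A)) atTop
        (nhds (S * (1 - A))) := ht.mul_const _
    have hpow0 : Tendsto (fun n : ℕ => A ^ n) atTop (nhds 0) :=
      squeeze_zero_norm' hbound (tendsto_pow_atTop_nhds_zero_of_lt_one r.coe_nonneg hr1')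
    have h3 : Tendsto (fun N : ℕ => (∑ n ∈ Finset.range N, A ^ n) * (1 - A)) atTop (nhds 1) := by
      have : (fun N : ℕ => (∑ n ∈ Finset.range N, A ^ n) * (1 - A))
          = fun N : ℕ => 1 - A ^ N := by
        funext N
        have := geom_sum_mul A N
        rw [← neg_sub A 1, mul_neg, this, neg_sub]
      rw [this]
      have := ((tendsto_const_nhds :
          Tendsto (fun _ : ℕ => (1 : Matrix (Fin d) (Fin d) ℂ)) atTop _).sub hpow0)
      simpa using this
    exact tendsto_nhds_unique h2 h3


lemma metzler_hurwitz_inv {d : ℕ} (hd : 0 < d) (M : Matrix (Fin d) (Fin d) ℝ)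
    (hM : Metzler M) (hH : HurwitzStable M) :
    ∃ N : Matrix (Fin d) (Fin d) ℝ, M * N = 1 ∧ N * M = 1 ∧
      (∀ i j, N i j ≤ 0) ∧ (∀ i, N i i < 0) := by
  haveI : Nonempty (Fin d) := Fin.pos_iff_nonempty.mp hd
  set Mc : Matrix (Fin d) (Fin d) ℂ := M.map Complex.ofReal with hMc
  set F : Finset ℂ := Mc.charpoly.roots.toFinset with hF
  set g : ℂ → ℝ := fun μ => ‖μ‖ ^ 2 / (-(2 * μ.re)) with hg
  set s : ℝ := 1 + (∑ i, |M i i|) + ∑ μ ∈ F, g μ with hs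
  have hcpne : Mc.charpoly ≠ 0 := (Matrix.charpoly_monic Mc).ne_zero
  have hFspec : ∀ μ ∈ F, μ ∈ spectrum ℂ Mc := by
    intro μ hμ
    rw [hF, Multiset.mem_toFinset, Polynomial.mem_roots hcpne] at hμ
    exact (charpoly_root_iff_spectrum Mc μ).mp hμ
  have hspecF : ∀ μ ∈ spectrum ℂ Mc, μ ∈ F := by
    intro μ hμ
    rw [hF, Multiset.mem_toFinset, Polynomial.mem_roots hcpne]
    exact (charpoly_root_iff_spectrum Mc μ).mpr hμ
  have hre : ∀ μ ∈ F, μ.re < 0 := fun μ h => hH μ (hFspec μ h)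
  have hg0 : ∀ μ ∈ F, 0 ≤ g μ := by
    intro μ h
    have := hre μ h
    apply div_nonneg (by positivity)
    linarith
  have hsum1 : (0:ℝ) ≤ ∑ i, |M i i| := Finset.sum_nonneg fun _ _ => abs_nonneg _
  have hsum2 : (0:ℝ) ≤ ∑ μ ∈ F, g μ := Finset.sum_nonneg hg0
  have hs_pos : 0 < s := by rw [hs]; linarith
  have hs_ne : s ≠ 0 := hs_pos.ne'
  have hsC_ne : ((s : ℝ) : ℂ) ≠ 0 := by exact_mod_cast hs_ne
  have hs_diag : ∀ i, 0 ≤ M i i + s := by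
    intro i
    have h1 : |M i i| ≤ ∑ k, |M k k| :=
      Finset.single_le_sum (f := fun k => |M k k|) (fun k _ => abs_nonneg _) (Finset.mem_univ i)
    have h2 := neg_abs_le (M i i)
    rw [hs]; linarith
  have hg_lt : ∀ μ ∈ F, g μ < s := by
    intro μ h
    have h1 : g μ ≤ ∑ ν ∈ F, g ν := Finset.single_le_sum hg0 h
    rw [hs]; linarith
  have hnormsq : ∀ z : ℂ, ‖z‖ ^ 2 = z.re * z.re + z.im * z.im := by
    intro z
    rw [Complex.sq_norm, Complex.normSq_apply]
  have hκ : ∀ μ ∈ spectrum ℂ Mc, ‖(μ + (s:ℂ))‖ < s := by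
    intro μ hμ
    have hreμ : μ.re < 0 := hH μ hμ
    have hglt := hg_lt μ (hspecF μ hμ)
    rw [hg] at hglt
    have hD : (0:ℝ) < -(2 * μ.re) := by linarith
    have hlt : ‖μ‖ ^ 2 < s * -(2 * μ.re) := (div_lt_iff₀ hD).mp hglt
    have e1 := hnormsq μ
    have e2 := hnormsq (μ + (s:ℂ))
    simp only [Complex.add_re, Complex.add_im, Complex.ofReal_re, Complex.ofReal_im] at e2
    have hsq : ‖(μ + (s:ℂ))‖ ^ 2 < s ^ 2 := by nlinarith
    exact lt_of_pow_lt_pow_left₀ 2 hs_pos.le hsq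
  set A : Matrix (Fin d) (Fin d) ℂ := ((s:ℝ):ℂ)⁻¹ • Mc + 1 with hA
  have hAspec : ∀ z ∈ spectrum ℂ A, ‖z‖ < 1 := by
    intro z hz
    set μ : ℂ := (s:ℂ) * (z - 1) with hμdef
    have hdet : (z • (1 : Matrix (Fin d) (Fin d) ℂ) - A).det = 0 :=
      (mem_spectrum_iff_det A z).mp hz
    have hfact : z • (1 : Matrix (Fin d) (Fin d) ℂ) - A
        = ((s:ℂ))⁻¹ • (μ • (1 : Matrix (Fin d) (Fin d) ℂ) - Mc) := by
      rw [smul_sub, smul_smul, hμdef, ← mul_assoc, inv_mul_cancel₀ hsC_ne, one_mul,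
        sub_smul, one_smul, hA]
      abel
    rw [hfact, Matrix.det_smul, Fintype.card_fin] at hdet
    have hdet2 : (μ • (1 : Matrix (Fin d) (Fin d) ℂ) - Mc).det = 0 := by
      have hpow : ((s:ℂ))⁻¹ ^ d ≠ 0 := pow_ne_zero _ (inv_ne_zero hsC_ne)
      exact (mul_eq_zero.mp hdet).resolve_left hpow
    have hμspec : μ ∈ spectrum ℂ Mc := (mem_spectrum_iff_det Mc μ).mpr hdet2
    have hκμ := hκ μ hμspec
    have hzval : z = ((s:ℂ))⁻¹ * (μ + (s:ℂ)) := by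
      rw [hμdef]; field_simp; ring
    rw [hzval, norm_mul, norm_inv, Complex.norm_real, Real.norm_eq_abs, abs_of_pos hs_pos]
    rw [inv_mul_eq_div, div_lt_one hs_pos]
    exact hκμ
  obtain ⟨S, hS, hL, hR⟩ := neumann_series hd A hAspec
  set Br : Matrix (Fin d) (Fin d) ℝ := s⁻¹ • M + 1 with hBr
  have hmapBr : Br.map Complex.ofReal = A := by
    ext i j
    by_cases hij : i = j <;>
      simp [hBr, hA, hMc, Matrix.map_apply, Matrix.add_apply, Matrix.smul_apply,
        Matrix.one_apply, hij] <;> push_cast <;> ring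
  have hBr0 : ∀ i j, 0 ≤ Br i j := by
    intro i j
    by_cases hij : i = j
    · subst hij
      have h1 : Br i i = s⁻¹ * M i i + 1 := by
        simp [hBr, Matrix.add_apply, Matrix.smul_apply, Matrix.one_apply]
      have h2 : (0:ℝ) ≤ s⁻¹ * (M i i + s) :=
        mul_nonneg (inv_nonneg.mpr hs_pos.le) (hs_diag i)
      rw [mul_add, inv_mul_cancel₀ hs_ne] at h2
      rw [h1]; exact h2
    · have h1 : Br i j = s⁻¹ * M i j := by
        simp [hBr, Matrix.add_apply, Matrix.smul_apply, Matrix.one_apply, hij]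
      rw [h1]
      exact mul_nonneg (inv_nonneg.mpr hs_pos.le) (hM i j hij)
  have hpow : ∀ (n : ℕ) i j, 0 ≤ (Br ^ n) i j := by
    intro n
    induction n with
    | zero => intro i j; rw [pow_zero]; by_cases hij : i = j <;> simp [Matrix.one_apply, hij]
    | succ n ih =>
      intro i j
      rw [pow_succ, Matrix.mul_apply]
      exact Finset.sum_nonneg fun k _ => mul_nonneg (ih i k) (hBr0 k j)
  have hpowmap : ∀ n : ℕ, (Br ^ n).map Complex.ofReal = A ^ n := by
    intro n
    have h := map_pow (Complex.ofRealHom.mapMatrix) Br n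
    simp only [RingHom.mapMatrix_apply] at h
    calc (Br ^ n).map Complex.ofReal = (Br ^ n).map Complex.ofRealHom := rfl
      _ = (Br.map Complex.ofRealHom) ^ n := h
      _ = (Br.map Complex.ofReal) ^ n := rfl
      _ = A ^ n := by rw [hmapBr]
  have hentry : ∀ i j, HasSum (fun n : ℕ => ((Br ^ n) i j : ℂ)) (S i j) := by
    intro i j
    have hcont : Continuous (fun X : Matrix (Fin d) (Fin d) ℂ => X i j) :=
      (continuous_apply j).comp (continuous_apply i)
    have hE := hS.map (AddMonoidHom.mk' (fun X : Matrix (Fin d) (Fin d) ℂ => X i j)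
      (fun X Y => rfl)) hcont
    have : (fun n : ℕ => ((Br ^ n) i j : ℂ)) = fun n : ℕ => (A ^ n) i j := by
      funext n
      rw [← hpowmap n, Matrix.map_apply]
    rw [this]
    exact hE
  have hre_sum : ∀ i j, HasSum (fun n : ℕ => (Br ^ n) i j) ((S i j).re) := by
    intro i j
    have := (hentry i j).mapL Complex.reCLM
    simpa using this
  have him : ∀ i j, (S i j).im = 0 := by
    intro i j
    have h1 := (hentry i j).mapL Complex.imCLM
    have h2 : HasSum (fun _ : ℕ => (0:ℝ)) ((S i j).im) := by
      simpa [Function.comp_def, Complex.imCLM_apply, Complex.ofReal_im] using h1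
    exact (hasSum_zero.unique h2).symm
  set Sr : Matrix (Fin d) (Fin d) ℝ := Matrix.of (fun i j => (S i j).re) with hSr
  have hS_eq : Sr.map Complex.ofReal = S := by
    ext i j
    apply Complex.ext <;> simp [hSr, Matrix.map_apply, him i j]
  have hSr0 : ∀ i j, 0 ≤ Sr i j := fun i j =>
    hasSum_le (fun n => hpow n i j) hasSum_zero (hre_sum i j)
  have hSr_diag : ∀ i, 1 ≤ Sr i i := by
    intro i
    have h1 := le_hasSum (hre_sum i i) 0 (fun n _ => hpow n i i)
    rw [pow_zero, Matrix.one_apply_eq] at h1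
    exact h1
  -- transfer the equations to ℝ
  have hinj : Function.Injective (fun X : Matrix (Fin d) (Fin d) ℝ => X.map Complex.ofReal) :=
    Matrix.map_injective Complex.ofReal_injective
  have hmap_mul : ∀ X Y : Matrix (Fin d) (Fin d) ℝ,
      (X * Y).map Complex.ofReal = X.map Complex.ofReal * Y.map Complex.ofReal := by
    intro X Y
    have := map_mul (Complex.ofRealHom.mapMatrix) X Y
    simp only [RingHom.mapMatrix_apply] at this
    exact this
  have hmap_one : ((1 : Matrix (Fin d) (Fin d) ℝ)).map Complex.ofReal = 1 := by
    have := _root_.map_one (Complex.ofRealHom.mapMatrix (m := Fin d))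
    simp only [RingHom.mapMatrix_apply] at this
    exact this
  have hmap_sub : ((1 : Matrix (Fin d) (Fin d) ℝ) - Br).map Complex.ofReal = 1 - A := by
    have := map_sub (Complex.ofRealHom.mapMatrix) (1 : Matrix (Fin d) (Fin d) ℝ) Br
    simp only [RingHom.mapMatrix_apply, _root_.map_one] at this
    rw [show ((1:Matrix (Fin d) (Fin d) ℝ) - Br).map Complex.ofReal
      = ((1:Matrix (Fin d) (Fin d) ℝ) - Br).map Complex.ofRealHom from rfl, this]
    rw [show Br.map Complex.ofRealHom = Br.map Complex.ofReal from rfl, hmapBr]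
  have hLr : ((1 : Matrix (Fin d) (Fin d) ℝ) - Br) * Sr = 1 := by
    apply hinj
    simp only [hmap_mul, hmap_sub, hS_eq, hmap_one]
    exact hL
  have hRr : Sr * ((1 : Matrix (Fin d) (Fin d) ℝ) - Br) = 1 := by
    apply hinj
    simp only [hmap_mul, hmap_sub, hS_eq, hmap_one]
    exact hR
  have h1Br : (1 : Matrix (Fin d) (Fin d) ℝ) - Br = (-(s⁻¹)) • M := by
    rw [hBr, neg_smul]
    abel
  refine ⟨(-(s⁻¹)) • Sr, ?_, ?_, ?_, ?_⟩
  · rw [mul_smul_comm, ← smul_mul_assoc, ← h1Br, hLr]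
  · rw [smul_mul_assoc, ← mul_smul_comm, ← h1Br, hRr]
  · intro i j
    have : ((-(s⁻¹)) • Sr) i j = -(s⁻¹ * Sr i j) := by
      simp [Matrix.smul_apply]
    rw [this]
    exact neg_nonpos.mpr (mul_nonneg (inv_nonneg.mpr hs_pos.le) (hSr0 i j))
  · intro i
    have : ((-(s⁻¹)) • Sr) i i = -(s⁻¹ * Sr i i) := by
      simp [Matrix.smul_apply]
    rw [this]
    have hsi : 0 < s⁻¹ := inv_pos.mpr hs_pos
    have := hSr_diag i
    nlinarith
end Neumann

theorem stmt5 {d : ℕ} (M : Matrix (Fin d) (Fin d) ℝ)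
    (hM : Metzler M) (hH : HurwitzStable M) :
    let v : Fin d → ℝ := (-1 : ℝ) ^ (d + 1) • ((fun _ => (1 : ℝ)) ᵥ* M.adjugate)
    (∀ j, 0 < v j) ∧
    (v ᵥ* M = fun _ => -((-1 : ℝ) ^ d * M.det)) ∧
    (∀ j, (v ᵥ* M) j < 0) := by
  intro v
  have hdetpos := det_sign_pos hH
  have hpart2 : v ᵥ* M = fun _ => -((-1 : ℝ) ^ d * M.det) := by
    show ((-1 : ℝ) ^ (d + 1) • ((fun _ => (1 : ℝ)) ᵥ* M.adjugate)) ᵥ* M = _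
    rw [Matrix.smul_vecMul, Matrix.vecMul_vecMul, Matrix.adjugate_mul]
    funext j
    rw [Pi.smul_apply, smul_eq_mul]
    have h1 : ((fun _ => (1:ℝ)) ᵥ* (M.det • (1 : Matrix (Fin d) (Fin d) ℝ))) j = M.det := by
      simp [Matrix.vecMul, dotProduct, Matrix.smul_apply, Matrix.one_apply]
    rw [h1, pow_succ]
    ring
  refine ⟨?_, hpart2, ?_⟩
  · rcases Nat.eq_zero_or_pos d with hd0 | hd
    · subst hd0; intro j; exact j.elim0
    · obtain ⟨N, hMN, hNM, hN0, hNdiag⟩ := metzler_hurwitz_inv hd M hM hH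
      have hadj : M.adjugate = M.det • N := by
        calc M.adjugate = M.adjugate * (M * N) := by rw [hMN, mul_one]
          _ = (M.adjugate * M) * N := by rw [mul_assoc]
          _ = (M.det • 1) * N := by rw [Matrix.adjugate_mul]
          _ = M.det • N := by rw [smul_mul_assoc, one_mul]
      intro j
      have hvj : v j = (-1 : ℝ) ^ (d + 1) * (M.det * ∑ i, N i j) := by
        show ((-1 : ℝ) ^ (d + 1) • ((fun _ => (1 : ℝ)) ᵥ* M.adjugate)) j = _
        rw [Pi.smul_apply, smul_eq_mul, hadj]
        congr 1
        simp [Matrix.vecMul, dotProduct, Matrix.smul_apply, Finset.mul_sum]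
      have hsum : ∑ i, N i j < 0 := by
        have he : N j j + ∑ i ∈ Finset.univ.erase j, N i j = ∑ i, N i j :=
          Finset.add_sum_erase Finset.univ (fun i => N i j) (Finset.mem_univ j)
        have h2 : ∑ i ∈ Finset.univ.erase j, N i j ≤ 0 :=
          Finset.sum_nonpos fun i _ => hN0 i j
        have := hNdiag j
        linarith
      rw [hvj, pow_succ]
      nlinarith
  · intro j
    rw [hpart2]
    show -((-1 : ℝ) ^ d * M.det) < 0
    linarith
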